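/- If U is a real-connected slice-domain in ℍ, then for every I ∈ 𝕊 the slice U ∩ ℂ_I is a (possibly empty) connected open subset of ℂ_I. -/

import Mathlib

noncomputable section

abbrev Hq := Quaternion ℝ

/-- The sphere of imaginary units of the quaternions. -/
def SphereS : Set Hq := {q | q ^ 2 = -1}

/-- The identification of `ℂ` with the slice plane `ℂ_I = ℝ + ℝI`. -/
def sliceEmb (I : Hq) : ℂ → Hq := fun z => (z.re : Hq) + (z.im : Hq) * I

/-- The slice complex plane `ℂ_I = ℝ + ℝI`. -/
def sliceC (I : Hq) : Set Hq := Set.range (sliceEmb I)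

/-- The slice-topology on the quaternions: the quotient topology induced by the
canonical map from the disjoint union of the slices, i.e. the supremum of the
topologies coinduced by the parametrizations of the slices. -/
def sliceTopology : TopologicalSpace Hq :=
  ⨆ I ∈ SphereS, TopologicalSpace.coinduced (sliceEmb I) inferInstance

/-- The real line inside the quaternions. -/
lemma sphere_re {I : Hq} (hI : I ∈ SphereS) : I.re = 0 := by
  have h : I * I = -1 := by rw [← sq]; exact hI
  have h0 : I.re * I.re - I.imI * I.imI - I.imJ * I.imJ - I.imK * I.imK = -1 := by
    have := congrArg QuaternionAlgebra.re h; simpa [Quaternion.re_one] using this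
  have h1 : I.re * I.imI + I.imI * I.re + I.imJ * I.imK - I.imK * I.imJ = 0 := by
    have := congrArg QuaternionAlgebra.imI h; simpa [Quaternion.imI_one] using this
  have h2 : I.re * I.imJ - I.imI * I.imK + I.imJ * I.re + I.imK * I.imI = 0 := by
    have := congrArg QuaternionAlgebra.imJ h; simpa [Quaternion.imJ_one] using this
  have h3 : I.re * I.imK + I.imI * I.imJ - I.imJ * I.imI + I.imK * I.re = 0 := by
    have := congrArg QuaternionAlgebra.imK h; simpa [Quaternion.imK_one] using this
  by_contra hre
  have e1 : I.re * I.imI = 0 := by linear_combination h1 / 2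
  have e2 : I.re * I.imJ = 0 := by linear_combination h2 / 2
  have e3 : I.re * I.imK = 0 := by linear_combination h3 / 2
  have i1 : I.imI = 0 := by
    rcases mul_eq_zero.1 e1 with h | h
    · exact absurd h hre
    · exact h
  have i2 : I.imJ = 0 := by
    rcases mul_eq_zero.1 e2 with h | h
    · exact absurd h hre
    · exact h
  have i3 : I.imK = 0 := by
    rcases mul_eq_zero.1 e3 with h | h
    · exact absurd h hre
    · exact h
  rw [i1, i2, i3] at h0
  nlinarith [mul_self_nonneg I.re]

lemma sphere_sumsq {I : Hq} (hI : I ∈ SphereS) :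
    I.imI ^ 2 + I.imJ ^ 2 + I.imK ^ 2 = 1 := by
  have h : I * I = -1 := by rw [← sq]; exact hI
  have h0 : I.re * I.re - I.imI * I.imI - I.imJ * I.imJ - I.imK * I.imK = -1 := by
    have := congrArg QuaternionAlgebra.re h; simpa [Quaternion.re_one] using this
  have hre := sphere_re hI
  linear_combination (-1 : ℝ) * h0 + I.re * hre

lemma sliceEmb_re (I : Hq) (z : ℂ) : (sliceEmb I z).re = z.re + z.im * I.re := by
  simp [sliceEmb, Quaternion.re_coe]

lemma sliceEmb_imI (I : Hq) (z : ℂ) : (sliceEmb I z).imI = z.im * I.imI := by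
  simp [sliceEmb, Quaternion.imI_coe]

lemma sliceEmb_imJ (I : Hq) (z : ℂ) : (sliceEmb I z).imJ = z.im * I.imJ := by
  simp [sliceEmb, Quaternion.imJ_coe]

lemma sliceEmb_imK (I : Hq) (z : ℂ) : (sliceEmb I z).imK = z.im * I.imK := by
  simp [sliceEmb, Quaternion.imK_coe]

lemma neg_mem_sphere {I : Hq} (hI : I ∈ SphereS) : -I ∈ SphereS := by
  have : (-I) ^ 2 = I ^ 2 := neg_sq I
  simpa [SphereS, this] using hI

lemma sliceEmb_neg (I : Hq) (z : ℂ) :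
    sliceEmb (-I) z = sliceEmb I ((starRingEnd ℂ) z) := by
  simp only [sliceEmb, Complex.conj_re, Complex.conj_im]
  push_cast
  rw [mul_neg, neg_mul]

lemma sliceEmb_ofReal (I : Hq) (x : ℝ) : sliceEmb I ((x : ℝ) : ℂ) = (x : Hq) := by
  simp [sliceEmb]

lemma sliceEmb_of_im_zero (I : Hq) {z : ℂ} (hz : z.im = 0) :
    sliceEmb I z = ((z.re : ℝ) : Hq) := by
  simp [sliceEmb, hz]

lemma sliceEmb_injective {I : Hq} (hI : I ∈ SphereS) :
    Function.Injective (sliceEmb I) := by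
  intro z w h
  have e0 : z.re + z.im * I.re = w.re + w.im * I.re := by
    have := congrArg QuaternionAlgebra.re h; simpa [sliceEmb_re] using this
  have e1 : z.im * I.imI = w.im * I.imI := by
    have := congrArg QuaternionAlgebra.imI h; simpa [sliceEmb_imI] using this
  have e2 : z.im * I.imJ = w.im * I.imJ := by
    have := congrArg QuaternionAlgebra.imJ h; simpa [sliceEmb_imJ] using this
  have e3 : z.im * I.imK = w.im * I.imK := by
    have := congrArg QuaternionAlgebra.imK h; simpa [sliceEmb_imK] using this
  have hs := sphere_sumsq hI
  have him : z.im = w.im := by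
    by_contra hne
    have hd : z.im - w.im ≠ 0 := sub_ne_zero.2 hne
    have i1 : I.imI = 0 := by
      have : (z.im - w.im) * I.imI = 0 := by linear_combination e1
      exact (mul_eq_zero.1 this).resolve_left hd
    have i2 : I.imJ = 0 := by
      have : (z.im - w.im) * I.imJ = 0 := by linear_combination e2
      exact (mul_eq_zero.1 this).resolve_left hd
    have i3 : I.imK = 0 := by
      have : (z.im - w.im) * I.imK = 0 := by linear_combination e3
      exact (mul_eq_zero.1 this).resolve_left hd
    rw [i1, i2, i3] at hs
    norm_num at hs
  have hre : z.re = w.re := by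
    rw [him] at e0; linarith
  exact Complex.ext hre him

lemma im_eq_zero_of_sliceEmb_eq {I J : Hq} (hI : I ∈ SphereS) (hJ : J ∈ SphereS)
    (hne : J ≠ I) (hne' : J ≠ -I) {z w : ℂ} (h : sliceEmb J z = sliceEmb I w) :
    z.im = 0 ∧ w.im = 0 := by
  have e1 : z.im * J.imI = w.im * I.imI := by
    have := congrArg QuaternionAlgebra.imI h; simpa [sliceEmb_imI] using this
  have e2 : z.im * J.imJ = w.im * I.imJ := by
    have := congrArg QuaternionAlgebra.imJ h; simpa [sliceEmb_imJ] using this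
  have e3 : z.im * J.imK = w.im * I.imK := by
    have := congrArg QuaternionAlgebra.imK h; simpa [sliceEmb_imK] using this
  have sI := sphere_sumsq hI
  have sJ := sphere_sumsq hJ
  have key : z.im ^ 2 = w.im ^ 2 := by
    linear_combination w.im ^ 2 * sI - z.im ^ 2 * sJ +
      (z.im * J.imI + w.im * I.imI) * e1 + (z.im * J.imJ + w.im * I.imJ) * e2 +
      (z.im * J.imK + w.im * I.imK) * e3
  by_cases hz : z.im = 0
  · refine ⟨hz, ?_⟩
    rw [hz] at key
    exact pow_eq_zero_iff (n := 2) (by norm_num) |>.1 (by rw [← key]; norm_num)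
  · exfalso
    have hcases : (w.im - z.im) * (w.im + z.im) = 0 := by linear_combination -key
    rcases mul_eq_zero.1 hcases with hc | hc
    · -- w.im = z.im, then J = I
      have hwz : w.im = z.im := sub_eq_zero.1 hc
      apply hne
      ext
      · rw [sphere_re hI, sphere_re hJ]
      · exact mul_left_cancel₀ hz (by rw [e1, hwz])
      · exact mul_left_cancel₀ hz (by rw [e2, hwz])
      · exact mul_left_cancel₀ hz (by rw [e3, hwz])
    · -- w.im = -z.im, then J = -I
      have hwz : w.im = -z.im := by linarith [hc]; 
      apply hne'
      ext
      · rw [sphere_re hJ]; simp [sphere_re hI]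
      · have : z.im * J.imI = z.im * (-I.imI) := by rw [e1, hwz]; ring
        simpa using mul_left_cancel₀ hz this
      · have : z.im * J.imJ = z.im * (-I.imJ) := by rw [e2, hwz]; ring
        simpa using mul_left_cancel₀ hz this
      · have : z.im * J.imK = z.im * (-I.imK) := by rw [e3, hwz]; ring
        simpa using mul_left_cancel₀ hz this

lemma isOpen_sliceTopology_iff {s : Set Hq} :
    @IsOpen Hq sliceTopology s ↔ ∀ I ∈ SphereS, IsOpen (sliceEmb I ⁻¹' s) := by
  show @IsOpen Hq (⨆ I ∈ SphereS, TopologicalSpace.coinduced (sliceEmb I) inferInstance) s ↔ _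
  simp only [isOpen_iSup_iff, isOpen_coinduced]

lemma aux_separation (U : Set Hq)
    (hop : ∀ J ∈ SphereS, IsOpen (sliceEmb J ⁻¹' U))
    (hconn : @IsPreconnected Hq sliceTopology U)
    {I : Hq} (hI : I ∈ SphereS)
    (A B : Set ℂ) (hA : IsOpen A) (hB : IsOpen B)
    (hUn : A ∪ B = sliceEmb I ⁻¹' U)
    (hdAB : ∀ z, z ∈ A → z ∈ B → False)
    (hAne : A.Nonempty) (hBne : B.Nonempty)
    (hBim : ∀ z ∈ B, z.im ≠ 0) : False := by
  classical
  obtain ⟨z₀, hz₀⟩ := hBne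
  have hnI : -I ∈ SphereS := neg_mem_sphere hI
  -- choose the open half-plane containing z₀ and its complement half-plane
  obtain ⟨H, H', hHo, hH'o, hHim, hz₀H, hsplit, hdHH'⟩ :
      ∃ H H' : Set ℂ, IsOpen H ∧ IsOpen H' ∧ (∀ z ∈ H, z.im ≠ 0) ∧ z₀ ∈ H ∧
        (∀ z : ℂ, z.im ≠ 0 → z ∈ H ∨ z ∈ H') ∧ (∀ z, z ∈ H → z ∈ H' → False) := by
    rcases lt_or_gt_of_ne (hBim z₀ hz₀) with hneg | hpos
    · exact ⟨{z | z.im < 0}, {z | 0 < z.im}, isOpen_lt Complex.continuous_im continuous_const,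
        isOpen_lt continuous_const Complex.continuous_im,
        fun z hz => ne_of_lt hz, hneg,
        fun z hz => (lt_or_gt_of_ne hz).imp id id,
        fun z (h1 : z.im < 0) (h2 : 0 < z.im) => absurd (lt_trans h1 h2) (lt_irrefl _)⟩
    · exact ⟨{z | 0 < z.im}, {z | z.im < 0}, isOpen_lt continuous_const Complex.continuous_im,
        isOpen_lt Complex.continuous_im continuous_const,
        fun z hz => (ne_of_gt hz), hpos,
        fun z hz => (lt_or_gt_of_ne hz).symm.imp id id,
        fun z (h1 : 0 < z.im) (h2 : z.im < 0) => absurd (lt_trans h2 h1) (lt_irrefl _)⟩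
  set W : Set ℂ := A ∪ (B ∩ H') with hW
  have hWo : IsOpen W := hA.union (hB.inter hH'o)
  have hWV : W ⊆ sliceEmb I ⁻¹' U := by
    rw [← hUn]; rintro z (hz | ⟨hz, _⟩)
    · exact Or.inl hz
    · exact Or.inr hz
  have hWBH : ∀ z, z ∈ W → z ∈ B ∩ H → False := by
    rintro z (hz | ⟨_, hz'⟩) ⟨hzB, hzH⟩
    · exact hdAB z hz hzB
    · exact hdHH' z hzH hz'
  set u : Set Hq := (U \ sliceC I) ∪ (sliceEmb I '' W) with hu
  set v : Set Hq := sliceEmb I '' (B ∩ H) with hv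
  -- preimage of u under sliceEmb I is W
  have hupreI : sliceEmb I ⁻¹' u = W := by
    ext z
    constructor
    · rintro (⟨_, hnot⟩ | ⟨w, hwW, hw⟩)
      · exact absurd ⟨z, rfl⟩ hnot
      · rwa [← sliceEmb_injective hI hw]
    · intro hz
      exact Or.inr ⟨z, hz, rfl⟩
  have hvpreI : sliceEmb I ⁻¹' v = B ∩ H := by
    ext z
    constructor
    · rintro ⟨w, hwBH, hw⟩
      rwa [← sliceEmb_injective hI hw]
    · intro hz
      exact ⟨z, hz, rfl⟩
  -- openness of u
  have huo : @IsOpen Hq sliceTopology u := by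
    rw [isOpen_sliceTopology_iff]
    intro J hJ
    by_cases hJI : J = I
    · subst hJI; rw [hupreI]; exact hWo
    by_cases hJnI : J = -I
    · subst hJnI
      have : sliceEmb (-I) ⁻¹' u = (starRingEnd ℂ) ⁻¹' W := by
        ext z
        rw [Set.mem_preimage, Set.mem_preimage, sliceEmb_neg, ← Set.mem_preimage, hupreI]
      rw [this]
      exact hWo.preimage Complex.continuous_conj
    · have : sliceEmb J ⁻¹' u = sliceEmb J ⁻¹' U := by
        ext z
        constructor
        · rintro (⟨hzU, _⟩ | ⟨w, hwW, hw⟩)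
          · exact hzU
          · show sliceEmb J z ∈ U
            rw [← hw]; exact hWV hwW
        · intro hz
          by_cases hc : sliceEmb J z ∈ sliceC I
          · obtain ⟨w, hw⟩ := hc
            obtain ⟨hzim, hwim⟩ := im_eq_zero_of_sliceEmb_eq hI hJ hJI hJnI hw.symm
            have hwU : w ∈ sliceEmb I ⁻¹' U := by
              show sliceEmb I w ∈ U; rw [hw]; exact hz
            have hwA : w ∈ A := by
              rw [← hUn] at hwU
              rcases hwU with h | h
              · exact h
              · exact absurd hwim (hBim w h)
            exact Or.inr ⟨w, Or.inl hwA, hw⟩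
          · exact Or.inl ⟨hz, hc⟩
      rw [this]
      exact hop J hJ
  -- openness of v
  have hvo : @IsOpen Hq sliceTopology v := by
    rw [isOpen_sliceTopology_iff]
    intro J hJ
    by_cases hJI : J = I
    · subst hJI; rw [hvpreI]; exact hB.inter hHo
    by_cases hJnI : J = -I
    · subst hJnI
      have : sliceEmb (-I) ⁻¹' v = (starRingEnd ℂ) ⁻¹' (B ∩ H) := by
        ext z
        rw [Set.mem_preimage, Set.mem_preimage, sliceEmb_neg, ← Set.mem_preimage, hvpreI]
      rw [this]
      exact (hB.inter hHo).preimage Complex.continuous_conj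
    · have : sliceEmb J ⁻¹' v = ∅ := by
        ext z
        simp only [Set.mem_preimage, Set.mem_empty_iff_false, iff_false]
        rintro ⟨w, ⟨hwB, hwH⟩, hw⟩
        obtain ⟨_, hwim⟩ := im_eq_zero_of_sliceEmb_eq hI hJ hJI hJnI hw.symm
        exact hHim w hwH hwim
      rw [this]
      exact isOpen_empty
  -- cover
  have hcov : U ⊆ u ∪ v := by
    intro q hq
    by_cases hc : q ∈ sliceC I
    · obtain ⟨z, rfl⟩ := hc
      have hzV : z ∈ A ∪ B := by rw [hUn]; exact hq
      rcases hzV with hzA | hzB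
      · exact Or.inl (Or.inr ⟨z, Or.inl hzA, rfl⟩)
      · rcases hsplit z (hBim z hzB) with hzH | hzH'
        · exact Or.inr ⟨z, ⟨hzB, hzH⟩, rfl⟩
        · exact Or.inl (Or.inr ⟨z, Or.inr ⟨hzB, hzH'⟩, rfl⟩)
    · exact Or.inl (Or.inl ⟨hq, hc⟩)
  -- nonemptiness
  obtain ⟨a, ha⟩ := hAne
  have hane : (U ∩ u).Nonempty := by
    refine ⟨sliceEmb I a, ?_, Or.inr ⟨a, Or.inl ha, rfl⟩⟩
    exact hWV (Or.inl ha)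
  have hbne : (U ∩ v).Nonempty := by
    refine ⟨sliceEmb I z₀, ?_, ⟨z₀, ⟨hz₀, hz₀H⟩, rfl⟩⟩
    have : z₀ ∈ sliceEmb I ⁻¹' U := by rw [← hUn]; exact Or.inr hz₀
    exact this
  obtain ⟨q, hqU, hqu, hqv⟩ := hconn u v huo hvo hcov hane hbne
  obtain ⟨w, hwBH, rfl⟩ := hqv
  rcases hqu with ⟨_, hnot⟩ | ⟨w', hw'W, hw'⟩
  · exact hnot ⟨w, rfl⟩
  · have := sliceEmb_injective hI hw'
    subst this
    exact hWBH w' hw'W hwBH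

def realLine : Set Hq := Set.range (fun x : ℝ => (x : Hq))

/-- `g : ℂ → ℍ` (thought of as a function on the slice `ℂ_I`) is (left) holomorphic on
`U`: real differentiable with `∂ₓ g + I ∂_y g = 0`. -/
def SliceHolomorphicOn (I : Hq) (g : ℂ → Hq) (U : Set ℂ) : Prop :=
  ∀ z ∈ U, ∃ L : ℂ →L[ℝ] Hq, HasFDerivAt g L z ∧ L 1 + I * L Complex.I = 0

/-- A function on a slice-open set is slice regular if it is holomorphic on each slice. -/
def SliceRegular (f : Hq → Hq) (Ω : Set Hq) : Prop :=
  ∀ I ∈ SphereS, SliceHolomorphicOn I (f ∘ sliceEmb I) (sliceEmb I ⁻¹' Ω)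

/-- `K(m)` for `K ∈ 𝕊^N` (with `K 0 = 1` by convention) and `1 ≤ m ≤ 2^N`:
`∏_{i=N}^{1} (K_i K_{i-1})^{m_i}` where `(m_N … m_1)₂` is the binary expansion of `m-1`. -/
def zetaTerm (K : ℕ → Hq) (N m : ℕ) : Hq :=
  ((List.range N).reverse.map
    (fun j => (K (j + 1) * K j) ^ (if Nat.testBit (m - 1) j then 1 else 0))).prod

/-- The matrix `σ_N` (0-indexed): entry `(i,j)` is `(-1)^{N+(j+1)}` if
`(i+1)+(j+1) = 2^N + 1`, and `0` otherwise. -/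
def sigmaMat (N : ℕ) : Matrix (Fin (2 ^ N)) (Fin (2 ^ N)) ℝ :=
  Matrix.of fun i j =>
    if (i : ℕ) + (j : ℕ) = 2 ^ N - 1 then (-1 : ℝ) ^ (N + (j : ℕ) + 1) else 0

def QOrth (I J : Hq) : Prop := (I * star J).re = 0

/-- Each slice of a real-connected slice-domain is a (possibly empty) connected open
subset of the slice plane. -/
theorem slice_of_realConnected_sliceDomain (U : Set Hq)
    (hopen : @IsOpen Hq sliceTopology U)
    (hconn : @IsPreconnected Hq sliceTopology U)
    (hne : U.Nonempty)
    (hreal : IsPreconnected ((fun x : ℝ => (x : Hq)) ⁻¹' U)) :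
    ∀ I ∈ SphereS, IsOpen (sliceEmb I ⁻¹' U) ∧ IsPreconnected (sliceEmb I ⁻¹' U) := by
  intro I hI
  have hop : ∀ J ∈ SphereS, IsOpen (sliceEmb J ⁻¹' U) :=
    isOpen_sliceTopology_iff.1 hopen
  refine ⟨hop I hI, ?_⟩
  intro u₀ v₀ hu₀ hv₀ hcov hne1 hne2
  by_contra hcon
  have hd : sliceEmb I ⁻¹' U ∩ (u₀ ∩ v₀) = ∅ := Set.not_nonempty_iff_eq_empty.1 hcon
  have hdisj : ∀ z, z ∈ sliceEmb I ⁻¹' U → z ∈ u₀ → z ∈ v₀ → False := by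
    intro z h1 h2 h3
    have : z ∈ sliceEmb I ⁻¹' U ∩ (u₀ ∩ v₀) := ⟨h1, h2, h3⟩
    rw [hd] at this
    exact this
  -- real dichotomy
  have hrl : (∀ x : ℝ, (x : ℂ) ∈ sliceEmb I ⁻¹' U → (x : ℂ) ∈ u₀ → False) ∨
      (∀ x : ℝ, (x : ℂ) ∈ sliceEmb I ⁻¹' U → (x : ℂ) ∈ v₀ → False) := by
    by_contra hcc
    push_neg at hcc
    obtain ⟨⟨x, hxV, hxu, -⟩, ⟨y, hyV, hyv, -⟩⟩ := hcc
    have hu₁ : IsOpen ((fun t : ℝ => (t : ℂ)) ⁻¹' u₀) := hu₀.preimage Complex.continuous_ofReal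
    have hv₁ : IsOpen ((fun t : ℝ => (t : ℂ)) ⁻¹' v₀) := hv₀.preimage Complex.continuous_ofReal
    have hmem : ∀ t : ℝ, t ∈ (fun x : ℝ => (x : Hq)) ⁻¹' U ↔ (t : ℂ) ∈ sliceEmb I ⁻¹' U := by
      intro t
      simp only [Set.mem_preimage]
      rw [sliceEmb_ofReal]
    obtain ⟨t, htR, htu, htv⟩ := hreal _ _ hu₁ hv₁
      (fun t ht => hcov ((hmem t).1 ht))
      ⟨x, (hmem x).2 hxV, hxu⟩ ⟨y, (hmem y).2 hyV, hyv⟩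
    exact hdisj _ ((hmem t).1 htR) htu htv
  have hVopen : IsOpen (sliceEmb I ⁻¹' U) := hop I hI
  rcases hrl with hno_u | hno_v
  · -- reals avoid u₀ part: B := V ∩ u₀
    apply aux_separation U hop hconn hI (sliceEmb I ⁻¹' U ∩ v₀) (sliceEmb I ⁻¹' U ∩ u₀)
      (hVopen.inter hv₀) (hVopen.inter hu₀)
    · ext z
      constructor
      · rintro (⟨h, -⟩ | ⟨h, -⟩) <;> exact h
      · intro hz
        rcases hcov hz with h | h
        · exact Or.inr ⟨hz, h⟩
        · exact Or.inl ⟨hz, h⟩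
    · rintro z ⟨h1, h2⟩ ⟨-, h3⟩
      exact hdisj z h1 h3 h2
    · exact hne2
    · exact hne1
    · rintro z ⟨hzV, hzu⟩ hzim
      have hz : z = ((z.re : ℝ) : ℂ) := Complex.ext (by simp) (by simp [hzim])
      exact hno_u z.re (hz ▸ hzV) (hz ▸ hzu)
  · apply aux_separation U hop hconn hI (sliceEmb I ⁻¹' U ∩ u₀) (sliceEmb I ⁻¹' U ∩ v₀)
      (hVopen.inter hu₀) (hVopen.inter hv₀)
    · ext z
      constructor
      · rintro (⟨h, -⟩ | ⟨h, -⟩) <;> exact h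
      · intro hz
        rcases hcov hz with h | h
        · exact Or.inl ⟨hz, h⟩
        · exact Or.inr ⟨hz, h⟩
    · rintro z ⟨h1, h2⟩ ⟨-, h3⟩
      exact hdisj z h1 h2 h3
    · exact hne1
    · exact hne2
    · rintro z ⟨hzV, hzv⟩ hzim
      have hz : z = ((z.re : ℝ) : ℂ) := Complex.ext (by simp) (by simp [hzim])
      exact hno_v z.re (hz ▸ hzV) (hz ▸ hzv)
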